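/- Let $T$ be a finite simplicial tree with a labelling system $\mathrm{Lab} : V(T) \to \mathcal{P}(\{1,\dots,N\})$. If every edge of $T$ is useless, then there exists a full vertex $z$ with $\mathrm{Lab}(z) = \{1,\dots,N\}$. -/

import Mathlib

open SimpleGraph

/-- `x` lies in the component of `u` obtained by removing the open edge `uv`
from the tree `G`: every path from `x` to `v` passes through `u`. -/
def OnSide {V : Type*} (G : SimpleGraph V) (u v x : V) : Prop :=
  ∀ p : G.Walk x v, p.IsPath → u ∈ p.support

/-- The component of `u` (after removing the edge `uv`) carries all labels. -/
def SideFull {V : Type*} (G : SimpleGraph V) {N : ℕ}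
    (Lab : V → Set (Fin N)) (u v : V) : Prop :=
  ∀ i : Fin N, ∃ x : V, OnSide G u v x ∧ i ∈ Lab x

/-- An edge `uv` is useless if one of the two components obtained by removing
it carries all labels. -/
def Useless {V : Type*} (G : SimpleGraph V) {N : ℕ}
    (Lab : V → Set (Fin N)) (u v : V) : Prop :=
  SideFull G Lab u v ∨ SideFull G Lab v u

private lemma path_unique {V : Type*} {G : SimpleGraph V} (hG : G.IsTree) {a b : V}
    {p q : G.Walk a b} (hp : p.IsPath) (hq : q.IsPath) : p = q :=
  ((hG.existsUnique_path a b).unique hp hq)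

/-- If `y` is on the `z`-side of the edge `zw` and `x` is on the `w`-side,
then every path from `y` to `x` passes through `z`. -/
private lemma cross_lemma {V : Type*} {G : SimpleGraph V} (hG : G.IsTree) {z w y x : V}
    (hzw : z ≠ w) (hy : OnSide G z w y) (hx : OnSide G w z x)
    (p : G.Walk y x) (hp : p.IsPath) : z ∈ p.support := by
  classical
  by_contra hz
  obtain ⟨q0⟩ := hG.isConnected.preconnected x z
  set q : G.Walk x z := q0.bypass with hqdef
  have hq : q.IsPath := q0.bypass_isPath
  have hwq : w ∈ q.support := hx q hq
  have hq'path : (q.takeUntil w hwq).IsPath := hq.takeUntil hwq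
  have hznq' : z ∉ (q.takeUntil w hwq).support := by
    intro hzz
    have hnodup := hq.support_nodup
    rw [← q.take_spec hwq, Walk.support_append, List.nodup_append] at hnodup
    have hztail : z ∈ (q.dropUntil w hwq).support.tail := by
      have hz' : z ∈ (q.dropUntil w hwq).support := Walk.end_mem_support _
      rw [Walk.support_eq_cons (q.dropUntil w hwq)] at hz'
      rcases List.mem_cons.mp hz' with h | h
      · exact absurd h hzw
      · exact h
    exact hnodup.2.2 z hzz z hztail rfl
  have hzr : z ∉ (p.append (q.takeUntil w hwq)).support := by
    rw [Walk.support_append]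
    intro h
    rcases List.mem_append.mp h with h | h
    · exact hz h
    · exact hznq' (List.mem_of_mem_tail h)
  exact hzr ((p.append (q.takeUntil w hwq)).support_bypass_subset
    (hy _ (p.append (q.takeUntil w hwq)).bypass_isPath))

/-- If `w ≠ v` are two neighbours of `u`, then the `w`-side of the edge `wu` is
contained in the `u`-side of the edge `uv`. -/
private lemma side_mono {V : Type*} {G : SimpleGraph V} (hG : G.IsTree) {u v w : V}
    (huv : G.Adj u v) (huw : G.Adj u w) (hwv : w ≠ v) {x : V}
    (hx : OnSide G w u x) : OnSide G u v x := by
  classical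
  intro p hp
  by_contra hu
  have hq : (Walk.cons huv p.reverse).IsPath := by
    rw [Walk.cons_isPath_iff]
    exact ⟨hp.reverse, by rwa [Walk.support_reverse, List.mem_reverse]⟩
  have hwmem : w ∈ (Walk.cons huv p.reverse).reverse.support := hx _ hq.reverse
  rw [Walk.support_reverse, List.mem_reverse, Walk.support_cons] at hwmem
  have hwp : w ∈ p.support := by
    rcases List.mem_cons.mp hwmem with h | h
    · exact absurd h huw.ne'
    · rwa [Walk.support_reverse, List.mem_reverse] at h
  have hr : (p.dropUntil w hwp).IsPath := hp.dropUntil hwp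
  have hur : u ∉ (p.dropUntil w hwp).support := fun h =>
    hu (Walk.support_dropUntil_subset _ _ h)
  have hs : (Walk.cons huv (p.dropUntil w hwp).reverse).IsPath := by
    rw [Walk.cons_isPath_iff]
    exact ⟨hr.reverse, by rwa [Walk.support_reverse, List.mem_reverse]⟩
  have he : (Walk.cons huw Walk.nil : G.Walk u w).IsPath := by
    simp [Walk.cons_isPath_iff, huw.ne]
  have heq := path_unique hG hs he
  have hv : v ∈ (Walk.cons huv (p.dropUntil w hwp).reverse).support := by
    rw [Walk.support_cons]
    exact List.mem_cons_of_mem _ (Walk.start_mem_support _)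
  rw [heq] at hv
  simp only [Walk.support_cons, Walk.support_nil, List.mem_cons,
    List.mem_singleton, List.not_mem_nil, or_false] at hv
  rcases hv with h | h
  · exact huv.ne' h
  · exact hwv h.symm

/-- If every edge of a finite tree with a labelling system is useless, then
there exists a full vertex. -/
theorem stmt10 {V : Type*} [Fintype V] (G : SimpleGraph V) (hG : G.IsTree)
    {N : ℕ} (Lab : V → Set (Fin N))
    (hA : ∀ (a b x : V) (p : G.Walk a b), p.IsPath → x ∈ p.support →
      Lab a ∩ Lab b ⊆ Lab x)
    (hB : ∀ i : Fin N, ∃ v : V, i ∈ Lab v)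
    (huseless : ∀ u v : V, G.Adj u v → Useless G Lab u v) :
    ∃ z : V, Lab z = Set.univ := by
  classical
  have conn := hG.isConnected
  by_cases hedge : ∃ u v : V, G.Adj u v
  · obtain ⟨u0, v0, h0⟩ := hedge
    set S : V → V → Finset V := fun u v => Finset.univ.filter (fun x => OnSide G u v x)
      with hSdef
    set T : Finset (V × V) :=
      Finset.univ.filter (fun p => G.Adj p.1 p.2 ∧ SideFull G Lab p.1 p.2) with hTdef
    have hTne : T.Nonempty := by
      rcases huseless u0 v0 h0 with h | h
      · exact ⟨(u0, v0), by simp [hTdef, h0, h]⟩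
      · exact ⟨(v0, u0), by simp [hTdef, h0.symm, h]⟩
    obtain ⟨⟨u, v⟩, hmemT, hmin⟩ := T.exists_min_image (fun p => (S p.1 p.2).card) hTne
    rw [hTdef, Finset.mem_filter] at hmemT
    obtain ⟨-, huv, hfull⟩ := hmemT
    have hsink : ∀ w, G.Adj u w → SideFull G Lab u w := by
      intro w hw
      by_contra hns
      have hswu : SideFull G Lab w u := (huseless u w hw).resolve_left hns
      have hwv : w ≠ v := fun h => hns (h ▸ hfull)
      have hlt : (S w u).card < (S u v).card := by
        apply Finset.card_lt_card
        rw [Finset.ssubset_def]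
        constructor
        · intro x hxmem
          rw [hSdef, Finset.mem_filter] at hxmem ⊢
          exact ⟨Finset.mem_univ _, side_mono hG huv hw hwv hxmem.2⟩
        · intro hsub
          have hu1 : u ∈ S u v := by
            rw [hSdef, Finset.mem_filter]
            exact ⟨Finset.mem_univ _, fun p hp => p.start_mem_support⟩
          have hu2 := hsub hu1
          rw [hSdef, Finset.mem_filter] at hu2
          have := hu2.2 Walk.nil (by simp)
          simp only [Walk.support_nil, List.mem_singleton] at this
          exact hw.ne' this
      have hge := hmin (w, u) (by simp [hTdef, hw.symm, hswu])
      simp only at hge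
      omega
    refine ⟨u, Set.eq_univ_of_forall fun i => ?_⟩
    obtain ⟨x, hx⟩ := hB i
    obtain ⟨p, hp⟩ : ∃ p : G.Walk u x, p.IsPath :=
      ⟨(conn.preconnected u x).some.bypass, Walk.bypass_isPath _⟩
    cases p with
    | nil => exact hx
    | @cons _ w _ hadj q =>
      have hOS : OnSide G w u x := by
        intro r hr
        have hreq : r = (Walk.cons hadj q).reverse := path_unique hG hr hp.reverse
        rw [hreq, Walk.support_reverse, List.mem_reverse, Walk.support_cons]
        exact List.mem_cons_of_mem _ q.start_mem_support
      obtain ⟨y, hyOS, hiy⟩ := hsink w hadj i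
      obtain ⟨s0⟩ := conn.preconnected y x
      have hus : u ∈ s0.bypass.support :=
        cross_lemma hG hadj.ne hyOS hOS s0.bypass s0.bypass_isPath
      exact hA y x u s0.bypass s0.bypass_isPath hus ⟨hiy, hx⟩
  · push_neg at hedge
    obtain ⟨z⟩ := conn.nonempty
    refine ⟨z, Set.eq_univ_of_forall fun i => ?_⟩
    obtain ⟨v, hv⟩ := hB i
    obtain ⟨p⟩ := conn.preconnected v z
    cases p with
    | nil => exact hv
    | cons h _ => exact absurd h (hedge _ _)
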